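/- For 0 < p_n < 1 with p_1 = 1 - p_n, the function π defined by π(0,b) = p_1^b for b < n-1, π(0,n-1) = p_1^{n-1}/p_n, π(0,n) = p_1^n/p_n, and π(1,b) = p_1^b for b < n, satisfies the balance equations: π(0,0) = π(1,0); π(0,b) = π(0,b-1)·p_1 for 0 < b < n-1; π(0,n-1) = π(0,n-2)·p_1 + π(0,n); π(0,n) = π(0,n-1)·p_1; π(1,b) = π(1,b+1) + π(0,b)·p_n for 0 ≤ b < n-1; and π(1,n-1) = π(0,n-1)·p_n. -/
import Mathlib


theorem stmt_1 (n : ℕ) (hn : 2 ≤ n) (pn p1 : ℝ) (hpn0 : 0 < pn) (hpn1 : pn < 1)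
    (hp1 : p1 = 1 - pn) (π : ℕ → ℕ → ℝ)
    (hA : ∀ b, b < n - 1 → π 0 b = p1 ^ b)
    (hB : π 0 (n - 1) = p1 ^ (n - 1) / pn)
    (hC : π 0 n = p1 ^ n / pn)
    (hD : ∀ b, b < n → π 1 b = p1 ^ b) :
    π 0 0 = π 1 0 ∧
    (∀ b, 0 < b → b < n - 1 → π 0 b = π 0 (b - 1) * p1) ∧
    π 0 (n - 1) = π 0 (n - 2) * p1 + π 0 n ∧
    π 0 n = π 0 (n - 1) * p1 ∧
    (∀ b, b < n - 1 → π 1 b = π 1 (b + 1) + π 0 b * pn) ∧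
    π 1 (n - 1) = π 0 (n - 1) * pn := by
  obtain ⟨m, rfl⟩ : ∃ m, n = m + 2 := ⟨n - 2, by omega⟩
  have hns : m + 2 - 1 = m + 1 := by omega
  have hns2 : m + 2 - 2 = m := by omega
  have hpn : pn ≠ 0 := ne_of_gt hpn0
  rw [hns] at hB
  refine ⟨?_, ?_, ?_, ?_, ?_, ?_⟩
  · rw [hA 0 (by omega), hD 0 (by omega)]
  · intro b hb0 hb
    obtain ⟨c, rfl⟩ : ∃ c, b = c + 1 := ⟨b - 1, by omega⟩
    rw [hA (c+1) hb, Nat.add_sub_cancel, hA c (by omega)]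
    ring
  · rw [hns, hns2] ; rw [hB, hC, hA m (by omega)]
    have : p1 ^ (m + 2) = p1 ^ (m + 1) * p1 := by ring
    rw [this]
    field_simp
    rw [hp1]
    ring
  · rw [hns] ; rw [hB, hC]
    field_simp
    ring
  · intro b hb
    rw [hD b (by omega), hD (b+1) (by omega), hA b hb, hp1]
    ring
  · rw [hns] ; rw [hD (m+1) (by omega), hB]
    field_simp
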